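/- For every x > 0, almost surely ∫₀^{T} du / (x + B(u)) < ∞, where T = inf{t ≥ 0 : x + B(t) = 0} is the first hitting time of 0 by x + B (which is almost surely finite). (The Brownian-motion case of the integrability claim in the proof of Lemma 4.4.) -/

import Mathlib

open MeasureTheory

/-- `B` is a standard Brownian motion on the probability space `(Ω, P)`: each `B t` is
measurable, sample paths are a.s. continuous, `B 0 = 0` a.s., and for `0 ≤ s ≤ t` the
increment `B t - B s` is Gaussian with mean `0` and variance `t - s`, independent of
`σ(B u : 0 ≤ u ≤ s)`. -/
structure IsStandardBrownianMotion {Ω : Type*} [MeasurableSpace Ω]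
    (P : Measure Ω) (B : ℝ → Ω → ℝ) : Prop where
  measurable : ∀ t : ℝ, Measurable (B t)
  cont : ∀ᵐ ω ∂P, Continuous fun t : ℝ => B t ω
  init : ∀ᵐ ω ∂P, B 0 ω = 0
  gauss_incr : ∀ s t : ℝ, 0 ≤ s → s ≤ t →
    Measure.map (fun ω => B t ω - B s ω) P
      = ProbabilityTheory.gaussianReal 0 (t - s).toNNReal
  indep_incr : ∀ s t : ℝ, 0 ≤ s → s ≤ t →
    ProbabilityTheory.Indep
      (MeasurableSpace.comap (fun ω => B t ω - B s ω) (borel ℝ))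
      (⨆ u ∈ Set.Icc (0 : ℝ) s, MeasurableSpace.comap (B u) (borel ℝ)) P

open Filter Set ProbabilityTheory
open scoped ENNReal NNReal Topology

set_option linter.unusedSectionVars false

noncomputable section

namespace AuxBM

variable {Ω : Type*} [MeasurableSpace Ω]

/-! ### Dyadic left approximation and a measurable modification -/

def dy (n : ℕ) (t : ℝ) : ℝ := (⌊t * 2 ^ n⌋ : ℤ) / 2 ^ n

lemma dy_le (n : ℕ) (t : ℝ) : dy n t ≤ t := by
  rw [dy, div_le_iff₀ (by positivity)]
  exact Int.floor_le _

lemma dy_nonneg (n : ℕ) {t : ℝ} (ht : 0 ≤ t) : 0 ≤ dy n t := by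
  apply div_nonneg _ (by positivity)
  exact_mod_cast Int.floor_nonneg.mpr (by positivity)

lemma tendsto_dy (t : ℝ) : Tendsto (fun n => dy n t) atTop (𝓝 t) := by
  have hlow : ∀ n : ℕ, t - (1/2:ℝ)^n ≤ dy n t := by
    intro n
    rw [dy, le_div_iff₀ (by positivity : (0:ℝ) < 2 ^ n)]
    have := Int.sub_one_lt_floor (t * 2 ^ n)
    have h2 : (1/2:ℝ)^n * 2^n = 1 := by
      rw [← mul_pow]; norm_num
    nlinarith [this]
  have h1 : Tendsto (fun n : ℕ => t - (1/2:ℝ)^n) atTop (𝓝 (t - 0)) :=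
    tendsto_const_nhds.sub (tendsto_pow_atTop_nhds_zero_of_lt_one (by norm_num) (by norm_num))
  rw [sub_zero] at h1
  exact tendsto_of_tendsto_of_tendsto_of_le_of_le h1 tendsto_const_nhds hlow (fun n => dy_le n t)

def Bh (B : ℝ → Ω → ℝ) (t : ℝ) (ω : Ω) : ℝ := limsup (fun n => B (dy n t) ω) atTop

lemma Bh_eq {B : ℝ → Ω → ℝ} {ω : Ω} (hc : Continuous fun s => B s ω) (t : ℝ) :
    Bh B t ω = B t ω :=
  (((hc.tendsto t).comp (tendsto_dy t)) : Tendsto (fun n => B (dy n t) ω) atTop (𝓝 (B t ω))).limsup_eq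

lemma measurable_dyB (B : ℝ → Ω → ℝ) (hm : ∀ t, Measurable (B t)) (n : ℕ) :
    Measurable (fun p : ℝ × Ω => B (dy n p.1) p.2) := by
  have h1 : Measurable (fun p : Ω × ℤ => B ((p.2 : ℝ) / 2 ^ n) p.1) :=
    measurable_from_prod_countable_left
      (f := fun p : Ω × ℤ => B ((p.2 : ℝ) / 2 ^ n) p.1) (fun k => hm ((k : ℝ) / 2 ^ n))
  have h2 : Measurable (fun p : ℝ × Ω => (p.2, ⌊p.1 * 2 ^ n⌋)) :=
    measurable_snd.prodMk (Int.measurable_floor.comp (measurable_fst.mul_const _))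
  exact h1.comp h2

lemma measurable_Bh (B : ℝ → Ω → ℝ) (hm : ∀ t, Measurable (B t)) :
    Measurable (fun p : ℝ × Ω => Bh B p.1 p.2) :=
  Measurable.limsup (fun n => measurable_dyB B hm n)

/-! ### The filtration -/

def Fs (B : ℝ → Ω → ℝ) (u : ℝ) : MeasurableSpace Ω :=
  ⨆ v ∈ Set.Icc (0:ℝ) u, MeasurableSpace.comap (B v) (borel ℝ)

lemma borel_real_eq : borel ℝ = (inferInstance : MeasurableSpace ℝ) :=
  BorelSpace.measurable_eq.symm

lemma measurable_Fs_B {B : ℝ → Ω → ℝ} {v u : ℝ} (hv : v ∈ Set.Icc 0 u) :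
    Measurable[Fs B u] (B v) := by
  intro s hs
  exact le_iSup₂ (f := fun v (_ : v ∈ Set.Icc (0:ℝ) u) => MeasurableSpace.comap (B v) (borel ℝ))
    v hv _ ⟨s, by rw [borel_real_eq]; exact hs, rfl⟩

lemma Fs_le {B : ℝ → Ω → ℝ} (hm : ∀ t, Measurable (B t)) (u : ℝ) :
    Fs B u ≤ ‹MeasurableSpace Ω› := by
  refine iSup₂_le fun v _ => ?_
  rw [borel_real_eq]
  exact (hm v).comap_le

lemma measurable_Fs_Bh {B : ℝ → Ω → ℝ} {u : ℝ} (hu : 0 ≤ u) :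
    Measurable[Fs B u] (fun ω => Bh B u ω) :=
  Measurable.limsup (fun n => measurable_Fs_B ⟨dy_nonneg n hu, dy_le n u⟩)

/-! ### Events -/

def Gq (B : ℝ → Ω → ℝ) (x u : ℝ) : Set Ω :=
  {ω | ∀ q : ℚ, 0 ≤ (q:ℝ) → (q:ℝ) ≤ u → 0 < x + B q ω}

lemma measurableSet_Gq_Fs {B : ℝ → Ω → ℝ} (x u : ℝ) :
    MeasurableSet[Fs B u] (Gq B x u) := by
  have : Gq B x u = ⋂ q : ℚ, {ω | 0 ≤ (q:ℝ) → (q:ℝ) ≤ u → 0 < x + B q ω} := by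
    ext ω; simp [Gq]
  rw [this]
  refine MeasurableSet.iInter fun q => ?_
  by_cases hq : 0 ≤ (q:ℝ) ∧ (q:ℝ) ≤ u
  · have : {ω : Ω | 0 ≤ (q:ℝ) → (q:ℝ) ≤ u → 0 < x + B q ω} = (B q) ⁻¹' (Set.Ioi (-x)) := by
      ext ω
      simp only [Set.mem_setOf_eq, Set.mem_preimage, Set.mem_Ioi]
      constructor
      · intro h; linarith [h hq.1 hq.2]
      · intro h _ _; linarith
    rw [this]
    exact measurable_Fs_B ⟨hq.1, hq.2⟩ measurableSet_Ioi
  · have : {ω : Ω | 0 ≤ (q:ℝ) → (q:ℝ) ≤ u → 0 < x + B q ω} = Set.univ := by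
      ext ω
      simp only [Set.mem_setOf_eq, Set.mem_univ, iff_true]
      intro h1 h2; exact absurd ⟨h1, h2⟩ hq
    rw [this]; exact MeasurableSet.univ

/-! ### Gaussian facts -/

def p0 : ℝ≥0∞ := gaussianReal 0 1 (Set.Iic (-2))

lemma gauss_scale {σ : ℝ} (hσ : 0 < σ) (s : Set ℝ) (hs : MeasurableSet s) :
    gaussianReal 0 ((σ^2).toNNReal) s = gaussianReal 0 1 ((fun y => σ * y) ⁻¹' s) := by
  have h := gaussianReal_map_const_mul (μ := 0) (v := 1) σ
  have hv : NNReal.mk (σ^2) (sq_nonneg σ) * 1 = (σ^2).toNNReal := by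
    rw [mul_one, Real.toNNReal_of_nonneg (sq_nonneg σ)]
  rw [mul_zero, hv] at h
  rw [← h, Measure.map_apply (measurable_const_mul σ) hs]

lemma p0_pos : 0 < p0 := by
  rw [p0, pos_iff_ne_zero]
  intro h
  have := (gaussianReal_absolutelyContinuous' 0 (v := 1) one_ne_zero) h
  simp [Real.volume_Iic] at this

lemma p0_le_one : p0 ≤ 1 := prob_le_one

lemma p0_ne_top : p0 ≠ ⊤ := by
  exact ne_top_of_le_ne_top ENNReal.one_ne_top p0_le_one

variable {P : Measure Ω} [IsProbabilityMeasure P] {B : ℝ → Ω → ℝ}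

lemma incr_law (hB : IsStandardBrownianMotion P B) {u a : ℝ} (hu : 0 ≤ u) (ha : 0 < a) :
    Measure.map (fun ω => B (u + a^2) ω - B u ω) P = gaussianReal 0 ((a^2).toNNReal) := by
  have h := hB.gauss_incr u (u + a^2) hu (by nlinarith)
  simpa using h

lemma incr_prob (hB : IsStandardBrownianMotion P B) {u a : ℝ} (hu : 0 ≤ u) (ha : 0 < a) :
    P {ω | B (u + a^2) ω - B u ω ≤ -(2*a)} = p0 := by
  have hinc : Measurable (fun ω => B (u + a^2) ω - B u ω) :=
    (hB.measurable _).sub (hB.measurable _)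
  have h1 : {ω | B (u + a^2) ω - B u ω ≤ -(2*a)}
      = (fun ω => B (u + a^2) ω - B u ω) ⁻¹' (Set.Iic (-(2*a))) := rfl
  rw [h1, ← Measure.map_apply hinc measurableSet_Iic, incr_law hB hu ha,
    gauss_scale ha _ measurableSet_Iic]
  congr 1
  ext y
  simp only [Set.mem_preimage, Set.mem_Iic]
  constructor
  · intro h
    nlinarith
  · intro h
    nlinarith

lemma indep_mul (hB : IsStandardBrownianMotion P B) {u a : ℝ} (hu : 0 ≤ u) (ha : 0 < a)
    {E : Set Ω} (hE : MeasurableSet[Fs B u] E) (s : Set ℝ) (hs : MeasurableSet s) :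
    P (E ∩ {ω | (B (u + a^2) ω - B u ω) ∈ s}) = P E * P {ω | (B (u + a^2) ω - B u ω) ∈ s} := by
  have hind := hB.indep_incr u (u + a^2) hu (by nlinarith)
  have hsm : MeasurableSet[MeasurableSpace.comap (fun ω => B (u + a^2) ω - B u ω) (borel ℝ)]
      ((fun ω => B (u + a^2) ω - B u ω) ⁻¹' s) :=
    ⟨s, by rw [borel_real_eq]; exact hs, rfl⟩
  have := (hind.indepSet_of_measurableSet hsm hE).measure_inter_eq_mul (μ := P)
  rw [Set.inter_comm] at this
  rw [show {ω | (B (u + a^2) ω - B u ω) ∈ s} = (fun ω => B (u + a^2) ω - B u ω) ⁻¹' s from rfl,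
    this, mul_comm]

/-! ### Part 1: hitting -/

def useq (x : ℝ) : ℕ → ℝ
  | 0 => 1
  | n+1 => useq x n + (((n:ℝ)+1) * Real.sqrt (useq x n) + x + 1)^2

def aseq (x : ℝ) (n : ℕ) : ℝ := ((n:ℝ)+1) * Real.sqrt (useq x n) + x + 1

lemma useq_succ (x : ℝ) (n : ℕ) : useq x (n+1) = useq x n + (aseq x n)^2 := rfl

lemma useq_one_le (x : ℝ) : ∀ n, 1 ≤ useq x n
  | 0 => le_refl 1
  | n+1 => by
      have h1 := useq_one_le x n
      have h2 : (0:ℝ) ≤ (aseq x n)^2 := sq_nonneg _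
      rw [useq_succ]; linarith

lemma aseq_pos {x : ℝ} (hx : 0 < x) (n : ℕ) : 0 < aseq x n := by
  have h := Real.sqrt_nonneg (useq x n)
  have h2 : (0:ℝ) ≤ (n:ℝ) + 1 := by positivity
  have := mul_nonneg h2 h
  rw [aseq]; nlinarith

def δseq : ℕ → ℝ≥0∞ := fun n => gaussianReal 0 1 (Set.Ioi (n:ℝ))

lemma δseq_anti : Antitone δseq := fun m n hmn =>
  measure_mono (fun y (hy : (n:ℝ) < y) => show (m:ℝ) < y from lt_of_le_of_lt (by exact_mod_cast hmn) hy)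

lemma δseq_tendsto : Tendsto δseq atTop (𝓝 0) := by
  have h : Tendsto δseq atTop (𝓝 (gaussianReal 0 1 (⋂ n : ℕ, Set.Ioi (n:ℝ)))) :=
    tendsto_measure_iInter_atTop
      (fun n => measurableSet_Ioi.nullMeasurableSet)
      (fun m n hmn y (hy : (n:ℝ) < y) => show (m:ℝ) < y from lt_of_le_of_lt (by exact_mod_cast hmn) hy)
      ⟨0, measure_ne_top _ _⟩
  have he : (⋂ n : ℕ, Set.Ioi (n:ℝ)) = ∅ := by
    ext y
    simp only [Set.mem_iInter, Set.mem_Ioi, Set.mem_empty_iff_false, iff_false, not_forall, not_lt]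
    obtain ⟨n, hn⟩ := exists_nat_gt y
    exact ⟨n, hn.le⟩
  rwa [he, measure_empty] at h

lemma tail_bound (hB : IsStandardBrownianMotion P B) {u c : ℝ} (hu1 : 1 ≤ u) (r : ℕ)
    (hc : (r:ℝ) * Real.sqrt u ≤ c) :
    P {ω | c < B u ω - B 0 ω} ≤ δseq r := by
  have hu0 : (0:ℝ) ≤ u := by linarith
  have hinc : Measurable (fun ω => B u ω - B 0 ω) := (hB.measurable _).sub (hB.measurable _)
  have h1 : {ω | c < B u ω - B 0 ω} = (fun ω => B u ω - B 0 ω) ⁻¹' (Set.Ioi c) := rfl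
  have hs : (0:ℝ) < Real.sqrt u := Real.sqrt_pos.mpr (by linarith)
  have hlaw := hB.gauss_incr 0 u le_rfl hu0
  rw [h1, ← Measure.map_apply hinc measurableSet_Ioi, hlaw]
  have hvar : (u - 0).toNNReal = ((Real.sqrt u)^2).toNNReal := by
    rw [Real.sq_sqrt hu0, sub_zero]
  rw [hvar, gauss_scale hs _ measurableSet_Ioi]
  refine measure_mono ?_
  intro y hy
  simp only [Set.mem_preimage, Set.mem_Ioi] at hy ⊢
  by_contra hyr
  push_neg at hyr
  have : Real.sqrt u * y ≤ Real.sqrt u * (r:ℝ) := by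
    exact mul_le_mul_of_nonneg_left hyr hs.le
  nlinarith

lemma Gq_rec (hB : IsStandardBrownianMotion P B) {x : ℝ} (hx : 0 < x) (n : ℕ) :
    P (Gq B x (useq x (n+1))) ≤ δseq n + P (Gq B x (useq x n)) * (1 - p0) := by
  set u := useq x n with hu
  set a := aseq x n with haa
  have hu1 : 1 ≤ u := useq_one_le x n
  have ha : 0 < a := aseq_pos hx n
  set A := {ω : Ω | a - x < B u ω - B 0 ω} with hA
  set J := {ω : Ω | (B (u + a^2) ω - B u ω) ∈ Set.Ioi (-(2*a))} with hJ
  have hae : ∀ᵐ ω ∂P, ω ∈ Gq B x (useq x (n+1)) → ω ∈ A ∪ (Gq B x u ∩ J) := by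
    filter_upwards [hB.cont, hB.init] with ω hc h0
    intro hω
    by_cases hAω : ω ∈ A
    · exact Or.inl hAω
    refine Or.inr ⟨fun q hq0 hqu => hω q hq0 (le_trans hqu (by rw [useq_succ]; nlinarith)), ?_⟩
    by_contra hJω
    simp only [hJ, Set.mem_setOf_eq, Set.mem_Ioi, not_lt] at hJω
    simp only [hA, Set.mem_setOf_eq, not_lt] at hAω
    rw [h0, sub_zero] at hAω
    have hneg : x + B (u + a^2) ω < 0 := by nlinarith
    set f : ℝ → ℝ := fun t => x + B t ω with hf
    have hcf : Continuous f := continuous_const.add hc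
    have hmem : f ⁻¹' (Set.Iio 0) ∈ 𝓝 (u + a^2) :=
      hcf.continuousAt (Iio_mem_nhds hneg)
    obtain ⟨ε, hε, hball⟩ := Metric.mem_nhds_iff.mp hmem
    have hupos : (0:ℝ) < u + a^2 := by nlinarith
    have hlo : max 0 (u + a^2 - ε) < u + a^2 := by
      rw [max_lt_iff]; constructor <;> linarith
    obtain ⟨q, hq1, hq2⟩ := exists_rat_btwn hlo
    have hq0 : (0:ℝ) ≤ (q:ℝ) := le_of_lt (lt_of_le_of_lt (le_max_left _ _) hq1)
    have hqball : (q:ℝ) ∈ Metric.ball (u + a^2) ε := by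
      rw [Metric.mem_ball, Real.dist_eq, abs_lt]
      have := lt_of_le_of_lt (le_max_right _ _) hq1
      constructor <;> linarith
    have := hball hqball
    simp only [Set.mem_preimage, Set.mem_Iio, hf] at this
    exact absurd (hω q hq0 hq2.le) (by linarith)
  calc P (Gq B x (useq x (n+1))) ≤ P (A ∪ (Gq B x u ∩ J)) := measure_mono_ae hae
    _ ≤ P A + P (Gq B x u ∩ J) := measure_union_le _ _
    _ ≤ δseq n + P (Gq B x u) * (1 - p0) := by
        gcongr
        · -- tail bound
          have : A = {ω : Ω | (a - x) < B u ω - B 0 ω} := rfl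
          rw [this]
          refine tail_bound hB hu1 n ?_
          have hs := Real.sqrt_nonneg u
          rw [haa, aseq]; nlinarith
        · -- independence
          rw [indep_mul hB (by linarith : (0:ℝ) ≤ u) ha (measurableSet_Gq_Fs x u) _
            measurableSet_Ioi]
          have hJc : {ω : Ω | (B (u + a^2) ω - B u ω) ∈ Set.Ioi (-(2*a))}
              = {ω : Ω | B (u + a^2) ω - B u ω ≤ -(2*a)}ᶜ := by
            ext ω; simp [not_le]
          rw [hJc, prob_compl_eq_one_sub, incr_prob hB (by linarith) ha]
          exact measurableSet_le (((hB.measurable _).sub (hB.measurable _))) measurable_const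

lemma Gq_inter_zero (hB : IsStandardBrownianMotion P B) {x : ℝ} (hx : 0 < x) :
    P (⋂ n, Gq B x (useq x n)) = 0 := by
  set c : ℝ≥0∞ := 1 - p0 with hc
  have hc1 : c < 1 := ENNReal.sub_lt_self ENNReal.one_ne_top one_ne_zero (ne_of_gt p0_pos)
  have hp0i : p0⁻¹ ≠ ⊤ := ENNReal.inv_ne_top.mpr (ne_of_gt p0_pos)
  have hgeo : ∀ k : ℕ, ∑ i ∈ Finset.range k, c^i ≤ p0⁻¹ := by
    intro k
    calc ∑ i ∈ Finset.range k, c^i ≤ ∑' i, c^i := ENNReal.sum_le_tsum _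
    _ = (1 - c)⁻¹ := ENNReal.tsum_geometric c
    _ = p0⁻¹ := by rw [hc, ENNReal.sub_sub_cancel ENNReal.one_ne_top p0_le_one]
  have key : ∀ N k, P (Gq B x (useq x (N+k)))
      ≤ δseq N * ∑ i ∈ Finset.range k, c^i + c^k * P (Gq B x (useq x N)) := by
    intro N k
    induction k with
    | zero => simp
    | succ k ih =>
      have h1 : N + (k+1) = (N+k) + 1 := by ring
      rw [h1]
      calc P (Gq B x (useq x ((N+k)+1)))
          ≤ δseq (N+k) + P (Gq B x (useq x (N+k))) * c := Gq_rec hB hx (N+k)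
        _ ≤ δseq N + (δseq N * ∑ i ∈ Finset.range k, c^i + c^k * P (Gq B x (useq x N))) * c := by
            gcongr
            exact δseq_anti (Nat.le_add_right N k)
        _ = δseq N * (1 + (∑ i ∈ Finset.range k, c^i) * c) + c^(k+1) * P (Gq B x (useq x N)) := by
            ring
        _ = δseq N * ∑ i ∈ Finset.range (k+1), c^i + c^(k+1) * P (Gq B x (useq x N)) := by
            rw [geom_sum_succ]
            ring
  have key2 : ∀ N k : ℕ, P (⋂ n, Gq B x (useq x n)) ≤ δseq N * p0⁻¹ + c^k := by
    intro N k
    calc P (⋂ n, Gq B x (useq x n)) ≤ P (Gq B x (useq x (N+k))) :=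
          measure_mono (Set.iInter_subset _ _)
      _ ≤ δseq N * ∑ i ∈ Finset.range k, c^i + c^k * P (Gq B x (useq x N)) := key N k
      _ ≤ δseq N * p0⁻¹ + c^k * 1 := by
          gcongr
          · exact hgeo k
          · exact prob_le_one
      _ = δseq N * p0⁻¹ + c^k := by rw [mul_one]
  have key3 : ∀ N : ℕ, P (⋂ n, Gq B x (useq x n)) ≤ δseq N * p0⁻¹ := by
    intro N
    have hlim : Tendsto (fun k : ℕ => δseq N * p0⁻¹ + c^k) atTop (𝓝 (δseq N * p0⁻¹ + 0)) :=
      tendsto_const_nhds.add (ENNReal.tendsto_pow_atTop_nhds_zero_of_lt_one hc1)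
    rw [add_zero] at hlim
    exact ge_of_tendsto' hlim (key2 N)
  have hlim2 : Tendsto (fun N => δseq N * p0⁻¹) atTop (𝓝 (0 * p0⁻¹)) :=
    ENNReal.Tendsto.mul_const δseq_tendsto (Or.inr hp0i)
  rw [zero_mul] at hlim2
  exact le_antisymm (ge_of_tendsto' hlim2 key3) (zero_le')

lemma as_hit (hB : IsStandardBrownianMotion P B) {x : ℝ} (hx : 0 < x) :
    ∀ᵐ ω ∂P, ∃ t : ℝ, 0 ≤ t ∧ x + B t ω = 0 := by
  have hni : ∀ᵐ ω ∂P, ω ∉ ⋂ n, Gq B x (useq x n) :=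
    compl_mem_ae_iff.mpr (Gq_inter_zero hB hx)
  filter_upwards [hB.cont, hB.init, hni] with ω hc h0ω hn
  simp only [Set.mem_iInter, not_forall] at hn
  obtain ⟨n, hGn⟩ := hn
  simp only [Gq, Set.mem_setOf_eq, not_forall, not_lt] at hGn
  obtain ⟨q, hq0, hqu, hqneg⟩ := hGn
  -- IVT on [0, q]
  set f : ℝ → ℝ := fun t => x + B t ω with hf
  have hcf : Continuous f := continuous_const.add hc
  have hmem : (0:ℝ) ∈ Set.Icc (f q) (f 0) := by
    constructor
    · exact hqneg
    · simp only [hf]; rw [h0ω]; linarith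
  have := intermediate_value_Icc' hq0 hcf.continuousOn hmem
  obtain ⟨t, ht, hft⟩ := this
  exact ⟨t, ht.1, hft⟩

/-! ### Part 2: occupation bounds -/

def JF2 (B : ℝ → Ω → ℝ) (x a : ℝ) : Set (ℝ × Ω) :=
  {p | (∀ q : ℚ, 0 ≤ (q:ℝ) → (q:ℝ) ≤ p.1 → 0 < x + B q p.2) ∧ x + Bh B p.1 p.2 ≤ a}

def JA (B : ℝ → Ω → ℝ) (x a : ℝ) : Set (ℝ × Ω) :=
  JF2 B x a ∩ {p | Bh B (p.1 + a^2) p.2 - Bh B p.1 p.2 ≤ -(2*a)}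

lemma measurableSet_Gq_part {B : ℝ → Ω → ℝ} (hm : ∀ t, Measurable (B t)) (x : ℝ) :
    MeasurableSet {p : ℝ × Ω | ∀ q : ℚ, 0 ≤ (q:ℝ) → (q:ℝ) ≤ p.1 → 0 < x + B q p.2} := by
  have : {p : ℝ × Ω | ∀ q : ℚ, 0 ≤ (q:ℝ) → (q:ℝ) ≤ p.1 → 0 < x + B q p.2}
      = ⋂ q : ℚ, {p : ℝ × Ω | 0 ≤ (q:ℝ) → (q:ℝ) ≤ p.1 → 0 < x + B q p.2} := by
    ext p; simp
  rw [this]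
  refine MeasurableSet.iInter fun q => ?_
  by_cases hq : 0 ≤ (q:ℝ)
  · have : {p : ℝ × Ω | 0 ≤ (q:ℝ) → (q:ℝ) ≤ p.1 → 0 < x + B q p.2}
        = {p : ℝ × Ω | p.1 < (q:ℝ)} ∪ {p : ℝ × Ω | 0 < x + B q p.2} := by
      ext p
      simp only [Set.mem_setOf_eq, Set.mem_union]
      constructor
      · intro h
        rcases lt_or_ge p.1 (q:ℝ) with h1 | h1
        · exact Or.inl h1
        · exact Or.inr (h hq h1)
      · rintro (h | h) _ h2
        · linarith
        · exact h
    rw [this]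
    refine MeasurableSet.union ?_ ?_
    · exact measurable_fst measurableSet_Iio
    · have : {p : ℝ × Ω | 0 < x + B q p.2} = Prod.snd ⁻¹' ((B q) ⁻¹' (Set.Ioi (-x))) := by
        ext p; simp only [Set.mem_setOf_eq, Set.mem_preimage, Set.mem_Ioi]; constructor <;>
          (intro h; linarith)
      rw [this]
      exact measurable_snd (hm q measurableSet_Ioi)
  · have : {p : ℝ × Ω | 0 ≤ (q:ℝ) → (q:ℝ) ≤ p.1 → 0 < x + B q p.2} = Set.univ := by
      ext p
      simp only [Set.mem_setOf_eq, Set.mem_univ, iff_true]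
      intro h; exact absurd h hq
    rw [this]; exact MeasurableSet.univ

lemma measurableSet_JF2 {B : ℝ → Ω → ℝ} (hm : ∀ t, Measurable (B t)) (x a : ℝ) :
    MeasurableSet (JF2 B x a) := by
  refine (measurableSet_Gq_part hm x).inter ?_
  exact measurableSet_le (measurable_const.add (measurable_Bh B hm)) measurable_const

lemma measurableSet_JA {B : ℝ → Ω → ℝ} (hm : ∀ t, Measurable (B t)) (x a : ℝ) :
    MeasurableSet (JA B x a) := by
  refine (measurableSet_JF2 hm x a).inter ?_
  have h0 : Measurable fun p : ℝ × Ω => (p.1 + a^2, p.2) :=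
    (measurable_fst.add_const _).prodMk measurable_snd
  have h1 : Measurable fun p : ℝ × Ω => Bh B (p.1 + a^2) p.2 := by
    refine Measurable.limsup fun n => ?_
    have h3 := (measurable_dyB B hm n).comp h0
    exact h3
  exact measurableSet_le (h1.sub (measurable_Bh B hm)) measurable_const

lemma measurableSet_JF2_slice_Fs {B : ℝ → Ω → ℝ} (x a : ℝ) {u : ℝ} (hu : 0 ≤ u) :
    MeasurableSet[Fs B u] {ω | (u, ω) ∈ JF2 B x a} := by
  have h2 : Measurable[Fs B u] (fun ω => x + Bh B u ω) :=
    (measurable_Fs_Bh hu).const_add x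
  have h3 : {ω | (u, ω) ∈ JF2 B x a} = Gq B x u ∩ ((fun ω => x + Bh B u ω) ⁻¹' Set.Iic a) := by
    ext ω; simp [JF2, Gq, Set.mem_setOf_eq]
  rw [h3]
  exact (measurableSet_Gq_Fs x u).inter (h2 measurableSet_Iic)

lemma slice_eq (hB : IsStandardBrownianMotion P B) (x a u : ℝ) :
    P ({ω | (u, ω) ∈ JF2 B x a} ∩ {ω | (B (u + a^2) ω - B u ω) ∈ Set.Iic (-(2*a))})
      = P {ω | (u, ω) ∈ JA B x a} := by
  refine measure_congr ?_
  filter_upwards [hB.cont] with ω hc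
  have h1 : ∀ t : ℝ, Bh B t ω = B t ω := Bh_eq hc
  refine eq_iff_iff.mpr ?_
  constructor
  · rintro ⟨hF, hI⟩
    refine ⟨hF, ?_⟩
    show Bh B (u + a^2) ω - Bh B u ω ≤ -(2*a)
    rw [h1, h1]
    exact hI
  · rintro ⟨hF, hI⟩
    refine ⟨hF, ?_⟩
    show B (u + a^2) ω - B u ω ∈ Set.Iic (-(2*a))
    have h2 : Bh B (u + a^2) ω - Bh B u ω ≤ -(2*a) := hI
    rw [h1, h1] at h2
    exact h2

lemma slice_prob (hB : IsStandardBrownianMotion P B) (x : ℝ) {a u : ℝ} (ha : 0 < a)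
    (hu : 0 ≤ u) :
    P {ω | (u, ω) ∈ JF2 B x a} = p0⁻¹ * P {ω | (u, ω) ∈ JA B x a} := by
  have h1 := indep_mul hB hu ha (measurableSet_JF2_slice_Fs x a hu)
    (Set.Iic (-(2*a))) measurableSet_Iic
  have h2 : P {ω | (B (u + a^2) ω - B u ω) ∈ Set.Iic (-(2*a))} = p0 := incr_prob hB hu ha
  rw [h2] at h1
  rw [← slice_eq hB x a u, h1, mul_comm (P _) p0, ← mul_assoc,
    ENNReal.inv_mul_cancel (ne_of_gt p0_pos) p0_ne_top, one_mul]

lemma occupation_pathwise {B : ℝ → Ω → ℝ} {x a : ℝ} (hx : 0 < x) (ha : 0 < a) {ω : Ω}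
    (hc : Continuous fun t => B t ω) :
    ∫⁻ u in Set.Ioi (0:ℝ), Set.indicator (JA B x a) (fun _ => (1:ℝ≥0∞)) (u, ω)
      ≤ ENNReal.ofReal (a^2) := by
  set S : Set ℝ := {t | 0 ≤ t ∧ x + B t ω < 0} with hS
  set V : ℝ := sInf S with hV
  have hBh : ∀ t : ℝ, Bh B t ω = B t ω := Bh_eq hc
  have claim : ∀ u : ℝ, 0 < u → (u, ω) ∈ JA B x a → u ∈ Set.Icc (V - a^2) V := by
    intro u hu hJA
    obtain ⟨⟨hG, hXa⟩, hinc⟩ := hJA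
    simp only [Set.mem_setOf_eq, hBh] at hXa hinc hG
    have hmemS : u + a^2 ∈ S := by
      refine ⟨by nlinarith, by nlinarith⟩
    have hbdd : BddBelow S := ⟨0, fun t ht => ht.1⟩
    have hVle : V ≤ u + a^2 := csInf_le hbdd hmemS
    have hle : ∀ t ∈ S, u ≤ t := by
      rintro t ⟨ht0, htneg⟩
      by_contra htu
      push_neg at htu
      set f : ℝ → ℝ := fun s => x + B s ω with hf
      have hcf : Continuous f := continuous_const.add hc
      have hmem : f ⁻¹' (Set.Iio 0) ∈ 𝓝 t := hcf.continuousAt (Iio_mem_nhds htneg)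
      obtain ⟨ε, hε, hball⟩ := Metric.mem_nhds_iff.mp hmem
      have hlo : t < min u (t + ε) := by
        rw [lt_min_iff]; exact ⟨htu, by linarith⟩
      obtain ⟨q, hq1, hq2⟩ := exists_rat_btwn hlo
      have hq0 : (0:ℝ) ≤ (q:ℝ) := le_of_lt (lt_of_le_of_lt ht0 hq1)
      have hqu : (q:ℝ) ≤ u := le_of_lt (lt_of_lt_of_le hq2 (min_le_left _ _))
      have hqball : (q:ℝ) ∈ Metric.ball t ε := by
        rw [Metric.mem_ball, Real.dist_eq, abs_lt]
        have := lt_of_lt_of_le hq2 (min_le_right _ _)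
        constructor <;> linarith
      have := hball hqball
      simp only [Set.mem_preimage, Set.mem_Iio, hf] at this
      exact absurd (hG q hq0 hqu) (by linarith)
    have hVge : u ≤ V := le_csInf ⟨_, hmemS⟩ hle
    exact ⟨by linarith, hVge⟩
  have hmono : ∀ u ∈ Set.Ioi (0:ℝ),
      Set.indicator (JA B x a) (fun _ => (1:ℝ≥0∞)) (u, ω)
        ≤ Set.indicator (Set.Icc (V - a^2) V) (fun _ => (1:ℝ≥0∞)) u := by
    intro u hu
    by_cases h : (u, ω) ∈ JA B x a
    · rw [Set.indicator_of_mem h, Set.indicator_of_mem (claim u hu h)]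
    · rw [Set.indicator_of_notMem h]; exact zero_le'
  calc ∫⁻ u in Set.Ioi (0:ℝ), Set.indicator (JA B x a) (fun _ => (1:ℝ≥0∞)) (u, ω)
      ≤ ∫⁻ u in Set.Ioi (0:ℝ), Set.indicator (Set.Icc (V - a^2) V) (fun _ => (1:ℝ≥0∞)) u :=
        lintegral_mono_ae ((ae_restrict_iff' measurableSet_Ioi).mpr (ae_of_all _ hmono))
    _ ≤ ∫⁻ u, Set.indicator (Set.Icc (V - a^2) V) (fun _ => (1:ℝ≥0∞)) u :=
        lintegral_mono' Measure.restrict_le_self le_rfl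
    _ = volume (Set.Icc (V - a^2) V) := by
        rw [lintegral_indicator measurableSet_Icc]
        simp
    _ = ENNReal.ofReal (a^2) := by
        rw [Real.volume_Icc]
        congr 1
        ring

lemma slice_lintegral {B : ℝ → Ω → ℝ} (hm : ∀ t, Measurable (B t)) {J : Set (ℝ × Ω)}
    (hJ : MeasurableSet J) (u : ℝ) :
    ∫⁻ ω, Set.indicator J (fun _ => (1:ℝ≥0∞)) (u, ω) ∂P = P {ω | (u, ω) ∈ J} := by
  have h1 : (fun ω => Set.indicator J (fun _ => (1:ℝ≥0∞)) (u, ω))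
      = Set.indicator {ω | (u, ω) ∈ J} (fun _ => (1:ℝ≥0∞)) := by
    funext ω
    by_cases h : (u, ω) ∈ J
    · simp [Set.indicator, h]
    · simp [Set.indicator, h]
  rw [h1]
  exact (lintegral_indicator_const (measurable_prodMk_left hJ) 1).trans (one_mul _)

lemma K_exp (hB : IsStandardBrownianMotion P B) {x a : ℝ} (hx : 0 < x) (ha : 0 < a) :
    ∫⁻ ω, (∫⁻ u in Set.Ioi (0:ℝ), Set.indicator (JF2 B x a) (fun _ => (1:ℝ≥0∞)) (u, ω)) ∂P
      ≤ p0⁻¹ * ENNReal.ofReal (a^2) := by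
  have hm := hB.measurable
  have hp0i : p0⁻¹ ≠ ⊤ := ENNReal.inv_ne_top.mpr (ne_of_gt p0_pos)
  have hmJF : Measurable (Set.indicator (JF2 B x a) (fun _ => (1:ℝ≥0∞))) :=
    measurable_const.indicator (measurableSet_JF2 hm x a)
  have hmJA : Measurable (Set.indicator (JA B x a) (fun _ => (1:ℝ≥0∞))) :=
    measurable_const.indicator (measurableSet_JA hm x a)
  have hmJFs : Measurable fun p : Ω × ℝ => Set.indicator (JF2 B x a) (fun _ => (1:ℝ≥0∞)) (p.2, p.1) := by
    have := hmJF.comp measurable_swap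
    exact this
  have hswap1 :
      ∫⁻ ω, (∫⁻ u in Set.Ioi (0:ℝ), Set.indicator (JF2 B x a) (fun _ => (1:ℝ≥0∞)) (u, ω)) ∂P
      = ∫⁻ u in Set.Ioi (0:ℝ), (∫⁻ ω, Set.indicator (JF2 B x a) (fun _ => (1:ℝ≥0∞)) (u, ω) ∂P) :=
    lintegral_lintegral_swap hmJFs.aemeasurable
  have hinner : ∀ u ∈ Set.Ioi (0:ℝ),
      (∫⁻ ω, Set.indicator (JF2 B x a) (fun _ => (1:ℝ≥0∞)) (u, ω) ∂P)
      = p0⁻¹ * ∫⁻ ω, Set.indicator (JA B x a) (fun _ => (1:ℝ≥0∞)) (u, ω) ∂P := by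
    intro u hu
    rw [slice_lintegral hm (measurableSet_JF2 hm x a) u,
      slice_lintegral hm (measurableSet_JA hm x a) u]
    exact slice_prob hB x ha (le_of_lt hu)
  have hmJAs : Measurable fun p : Ω × ℝ => Set.indicator (JA B x a) (fun _ => (1:ℝ≥0∞)) (p.2, p.1) := by
    have := hmJA.comp measurable_swap
    exact this
  have hswap2 :
      ∫⁻ u in Set.Ioi (0:ℝ), (∫⁻ ω, Set.indicator (JA B x a) (fun _ => (1:ℝ≥0∞)) (u, ω) ∂P)
      = ∫⁻ ω, (∫⁻ u in Set.Ioi (0:ℝ), Set.indicator (JA B x a) (fun _ => (1:ℝ≥0∞)) (u, ω)) ∂P :=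
    (lintegral_lintegral_swap hmJAs.aemeasurable).symm
  calc ∫⁻ ω, (∫⁻ u in Set.Ioi (0:ℝ), Set.indicator (JF2 B x a) (fun _ => (1:ℝ≥0∞)) (u, ω)) ∂P
      = ∫⁻ u in Set.Ioi (0:ℝ), (∫⁻ ω, Set.indicator (JF2 B x a) (fun _ => (1:ℝ≥0∞)) (u, ω) ∂P) :=
        hswap1
    _ = ∫⁻ u in Set.Ioi (0:ℝ),
          p0⁻¹ * ∫⁻ ω, Set.indicator (JA B x a) (fun _ => (1:ℝ≥0∞)) (u, ω) ∂P :=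
        lintegral_congr_ae ((ae_restrict_iff' measurableSet_Ioi).mpr (ae_of_all _ hinner))
    _ = p0⁻¹ * ∫⁻ u in Set.Ioi (0:ℝ),
          (∫⁻ ω, Set.indicator (JA B x a) (fun _ => (1:ℝ≥0∞)) (u, ω) ∂P) :=
        lintegral_const_mul' _ _ hp0i
    _ = p0⁻¹ * ∫⁻ ω, (∫⁻ u in Set.Ioi (0:ℝ),
          Set.indicator (JA B x a) (fun _ => (1:ℝ≥0∞)) (u, ω)) ∂P := by rw [hswap2]
    _ ≤ p0⁻¹ * ∫⁻ _ω, ENNReal.ofReal (a^2) ∂P := by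
        refine mul_le_mul_right (lintegral_mono_ae ?_) _
        filter_upwards [hB.cont] with ω hc
        exact occupation_pathwise hx ha hc
    _ = p0⁻¹ * ENNReal.ofReal (a^2) := by
        rw [lintegral_const, measure_univ, mul_one]

def Kfun (B : ℝ → Ω → ℝ) (x : ℝ) (n : ℕ) (ω : Ω) : ℝ≥0∞ :=
  ∫⁻ u in Set.Ioi (0:ℝ), Set.indicator (JF2 B x ((1/2:ℝ)^n)) (fun _ => (1:ℝ≥0∞)) (u, ω)

lemma measurable_Kfun {B : ℝ → Ω → ℝ} (hm : ∀ t, Measurable (B t)) (x : ℝ) (n : ℕ) :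
    Measurable (Kfun B x n) :=
  Measurable.lintegral_prod_left'
    (measurable_const.indicator (measurableSet_JF2 hm x _))

lemma W_lintegral (hB : IsStandardBrownianMotion P B) {x : ℝ} (hx : 0 < x) :
    ∫⁻ ω, (∑' n : ℕ, (2:ℝ≥0∞)^(n+1) * Kfun B x n ω) ∂P ≠ ⊤ := by
  have hm := hB.measurable
  have hp0i : p0⁻¹ ≠ ⊤ := ENNReal.inv_ne_top.mpr (ne_of_gt p0_pos)
  have h12 : ENNReal.ofReal (1/2 : ℝ) < 1 := by
    rw [← ENNReal.ofReal_one]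
    exact ENNReal.ofReal_lt_ofReal_iff_of_nonneg (by norm_num) |>.mpr (by norm_num)
  have hsum : ∫⁻ ω, (∑' n : ℕ, (2:ℝ≥0∞)^(n+1) * Kfun B x n ω) ∂P
      = ∑' n : ℕ, ∫⁻ ω, (2:ℝ≥0∞)^(n+1) * Kfun B x n ω ∂P :=
    lintegral_tsum fun n => ((measurable_Kfun hm x n).const_mul _).aemeasurable
  rw [hsum, ← lt_top_iff_ne_top]
  have hterm : ∀ n : ℕ, ∫⁻ ω, (2:ℝ≥0∞)^(n+1) * Kfun B x n ω ∂P
      ≤ 2 * p0⁻¹ * (ENNReal.ofReal (1/2 : ℝ))^n := by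
    intro n
    have ha : (0:ℝ) < (1/2:ℝ)^n := by positivity
    calc ∫⁻ ω, (2:ℝ≥0∞)^(n+1) * Kfun B x n ω ∂P
        = (2:ℝ≥0∞)^(n+1) * ∫⁻ ω, Kfun B x n ω ∂P := lintegral_const_mul' _ _ (by
          exact ENNReal.pow_ne_top ENNReal.ofNat_ne_top)
      _ ≤ (2:ℝ≥0∞)^(n+1) * (p0⁻¹ * ENNReal.ofReal (((1/2:ℝ)^n)^2)) := by
          gcongr
          exact K_exp hB hx ha
      _ = 2 * p0⁻¹ * ((2:ℝ≥0∞)^n * ENNReal.ofReal (((1/2:ℝ)^n)^2)) := by ring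
      _ ≤ 2 * p0⁻¹ * (ENNReal.ofReal (1/2 : ℝ))^n := by
          gcongr 2 * p0⁻¹ * ?_
          have h1 : (((1/2:ℝ)^n)^2) = ((1/4:ℝ))^n := by
            rw [← pow_mul, mul_comm, pow_mul]
            norm_num
          rw [h1, ENNReal.ofReal_pow (by norm_num : (0:ℝ) ≤ 1/4), ← mul_pow]
          have h2 : (2:ℝ≥0∞) * ENNReal.ofReal (1/4) = ENNReal.ofReal (1/2) := by
            rw [show (2:ℝ≥0∞) = ENNReal.ofReal (2:ℝ) by simp,
              ← ENNReal.ofReal_mul (by norm_num : (0:ℝ) ≤ 2)]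
            norm_num
          rw [h2]
  calc ∑' n : ℕ, ∫⁻ ω, (2:ℝ≥0∞)^(n+1) * Kfun B x n ω ∂P
      ≤ ∑' n : ℕ, 2 * p0⁻¹ * (ENNReal.ofReal (1/2 : ℝ))^n := ENNReal.tsum_le_tsum hterm
    _ = 2 * p0⁻¹ * ∑' n : ℕ, (ENNReal.ofReal (1/2 : ℝ))^n := ENNReal.tsum_mul_left
    _ = 2 * p0⁻¹ * (1 - ENNReal.ofReal (1/2 : ℝ))⁻¹ := by rw [ENNReal.tsum_geometric]
    _ < ⊤ := by
        refine ENNReal.mul_lt_top ?_ ?_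
        · exact ENNReal.mul_lt_top (by norm_num) (lt_of_le_of_ne le_top hp0i)
        · rw [ENNReal.inv_lt_top]
          exact tsub_pos_of_lt h12

lemma W_finite (hB : IsStandardBrownianMotion P B) {x : ℝ} (hx : 0 < x) :
    ∀ᵐ ω ∂P, (∑' n : ℕ, (2:ℝ≥0∞)^(n+1) * Kfun B x n ω) < ⊤ :=
  ae_lt_top (Measurable.ennreal_tsum fun n => (measurable_Kfun hB.measurable x n).const_mul _)
    (W_lintegral hB hx)

lemma one_div_le {y : ℝ} (hy : 0 < y) :
    ENNReal.ofReal (1/y) ≤ 1 + ∑' n : ℕ, (2:ℝ≥0∞)^(n+1) * (if y ≤ (1/2:ℝ)^n then 1 else 0) := by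
  rcases lt_or_ge 1 y with h1 | h1
  · calc ENNReal.ofReal (1/y) ≤ ENNReal.ofReal 1 := by
          apply ENNReal.ofReal_le_ofReal
          rw [div_le_one hy]
          linarith
      _ = 1 := ENNReal.ofReal_one
      _ ≤ 1 + _ := le_self_add
  · have hex : ∃ n : ℕ, (1/2:ℝ)^(n+1) < y := by
      obtain ⟨n, hn⟩ := exists_pow_lt_of_lt_one hy (by norm_num : (1/2:ℝ) < 1)
      refine ⟨n, lt_of_le_of_lt ?_ hn⟩
      exact pow_le_pow_of_le_one (by norm_num) (by norm_num) (Nat.le_succ n)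
    set k := Nat.find hex with hk
    have hky : (1/2:ℝ)^(k+1) < y := Nat.find_spec hex
    have hyk : y ≤ (1/2:ℝ)^k := by
      rcases Nat.eq_zero_or_pos k with h | h
      · rw [h]; simpa using h1
      · obtain ⟨m, hm⟩ := Nat.exists_eq_add_of_lt h
        have hmin := Nat.find_min hex (show m < k from by omega)
        push_neg at hmin
        have : k = m + 1 := by omega
        rw [this]
        exact hmin
    calc ENNReal.ofReal (1/y) ≤ ENNReal.ofReal ((2:ℝ)^(k+1)) := by
          apply ENNReal.ofReal_le_ofReal
          rw [div_le_iff₀ hy]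
          have h2 : (2:ℝ)^(k+1) * (1/2:ℝ)^(k+1) = 1 := by
            rw [← mul_pow]; norm_num
          nlinarith [pow_pos (show (0:ℝ) < 2 by norm_num) (k+1)]
      _ = (2:ℝ≥0∞)^(k+1) := by
          rw [ENNReal.ofReal_pow (by norm_num : (0:ℝ) ≤ 2)]
          norm_num
      _ = (2:ℝ≥0∞)^(k+1) * (if y ≤ (1/2:ℝ)^k then 1 else 0) := by
          rw [if_pos hyk, mul_one]
      _ ≤ ∑' n : ℕ, (2:ℝ≥0∞)^(n+1) * (if y ≤ (1/2:ℝ)^n then 1 else 0) := ENNReal.le_tsum k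
      _ ≤ 1 + _ := le_add_self

end AuxBM

end

/-- The Brownian-motion case of the integrability claim in the proof of Lemma 4.4:
for `x > 0`, almost surely the first hitting time `T = inf{t ≥ 0 : x + B t = 0}` of
`0` by `x + B` is finite (the hitting set is nonempty), and
`∫₀^T du / (x + B u) < ∞`. -/
theorem stmt_16 {Ω : Type*} [MeasurableSpace Ω] (P : Measure Ω)
    [IsProbabilityMeasure P] (B : ℝ → Ω → ℝ)
    (hB : IsStandardBrownianMotion P B) (x : ℝ) (hx : 0 < x) :
    ∀ᵐ ω ∂P, (∃ t : ℝ, 0 ≤ t ∧ x + B t ω = 0) ∧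
      ∫⁻ u in Set.Ioo (0 : ℝ) (sInf {t : ℝ | 0 ≤ t ∧ x + B t ω = 0}),
        ENNReal.ofReal (1 / (x + B u ω)) < ⊤ := by
  filter_upwards [hB.cont, hB.init, AuxBM.as_hit hB hx, AuxBM.W_finite hB hx]
    with ω hc h0 hhit hW
  refine ⟨hhit, ?_⟩
  set S : Set ℝ := {t : ℝ | 0 ≤ t ∧ x + B t ω = 0} with hS
  set T : ℝ := sInf S with hT
  have hSne : S.Nonempty := by
    obtain ⟨t, ht1, ht2⟩ := hhit
    exact ⟨t, ht1, ht2⟩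
  have hbdd : BddBelow S := ⟨0, fun t ht => ht.1⟩
  have hcx : Continuous fun t : ℝ => x + B t ω := continuous_const.add hc
  have hSc : IsClosed S := by
    have hSeq : S = Set.Ici (0:ℝ) ∩ (fun t : ℝ => x + B t ω) ⁻¹' {0} := by
      ext t
      simp [hS, Set.mem_Ici]
    rw [hSeq]
    exact isClosed_Ici.inter (isClosed_singleton.preimage hcx)
  have hTS : T ∈ S := hSc.csInf_mem hSne hbdd
  have hpos : ∀ u, 0 < u → u < T → 0 < x + B u ω := by
    intro u hu0 huT
    by_contra hle
    push_neg at hle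
    have hmem : (0:ℝ) ∈ Set.Icc (x + B u ω) (x + B 0 ω) := ⟨hle, by rw [h0]; linarith⟩
    obtain ⟨t, ht, hft⟩ := intermediate_value_Icc' (le_of_lt hu0) hcx.continuousOn hmem
    have htS : t ∈ S := ⟨ht.1, hft⟩
    have hle2 := csInf_le hbdd htS
    rw [← hT] at hle2
    linarith [ht.2]
  have key : ∫⁻ u in Set.Ioo (0:ℝ) T, ENNReal.ofReal (1 / (x + B u ω))
      ≤ volume (Set.Ioo (0:ℝ) T) + ∑' n : ℕ, (2:ℝ≥0∞)^(n+1) * AuxBM.Kfun B x n ω := by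
    have hstep1 : ∫⁻ u in Set.Ioo (0:ℝ) T, ENNReal.ofReal (1 / (x + B u ω))
        ≤ ∫⁻ u in Set.Ioo (0:ℝ) T,
            (1 + ∑' n : ℕ, (2:ℝ≥0∞)^(n+1) * (if x + B u ω ≤ (1/2:ℝ)^n then 1 else 0)) := by
      refine lintegral_mono_ae ((ae_restrict_iff' measurableSet_Ioo).mpr (ae_of_all _ ?_))
      intro u hu
      exact AuxBM.one_div_le (hpos u hu.1 hu.2)
    refine le_trans hstep1 ?_
    have hmeas_ite : ∀ n : ℕ, Measurable fun u : ℝ =>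
        (if x + B u ω ≤ (1/2:ℝ)^n then (1:ℝ≥0∞) else 0) := by
      intro n
      have hsm : MeasurableSet {u : ℝ | x + B u ω ≤ (1/2:ℝ)^n} :=
        measurableSet_le hcx.measurable measurable_const
      have heq : (fun u : ℝ => (if x + B u ω ≤ (1/2:ℝ)^n then (1:ℝ≥0∞) else 0))
          = Set.indicator {u : ℝ | x + B u ω ≤ (1/2:ℝ)^n} (fun _ => (1:ℝ≥0∞)) := by
        funext u
        by_cases h : x + B u ω ≤ (1/2:ℝ)^n
        · simp [Set.indicator, h]
        · simp [Set.indicator, h]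
      rw [heq]
      exact measurable_const.indicator hsm
    rw [lintegral_add_left measurable_const]
    gcongr
    · exact le_of_eq (setLIntegral_one _)
    · rw [lintegral_tsum (fun n => ((hmeas_ite n).const_mul _).aemeasurable)]
      refine ENNReal.tsum_le_tsum fun n => ?_
      rw [lintegral_const_mul' _ _ (ENNReal.pow_ne_top ENNReal.ofNat_ne_top)]
      refine mul_le_mul_right ?_ _
      have hptwise : ∀ u ∈ Set.Ioo (0:ℝ) T,
          (if x + B u ω ≤ (1/2:ℝ)^n then (1:ℝ≥0∞) else 0)
            ≤ Set.indicator (AuxBM.JF2 B x ((1/2:ℝ)^n)) (fun _ => (1:ℝ≥0∞)) (u, ω) := by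
        intro u hu
        by_cases h : x + B u ω ≤ (1/2:ℝ)^n
        · rw [if_pos h]
          have hmemJ : (u, ω) ∈ AuxBM.JF2 B x ((1/2:ℝ)^n) := by
            constructor
            · intro q hq0 hqu
              rcases eq_or_lt_of_le hq0 with hq | hq
              · rw [← hq, h0]
                linarith
              · exact hpos q hq (lt_of_le_of_lt hqu hu.2)
            · show x + AuxBM.Bh B u ω ≤ (1/2:ℝ)^n
              rw [AuxBM.Bh_eq hc]
              exact h
          rw [Set.indicator_of_mem hmemJ]
        · rw [if_neg h]
          exact zero_le'
      calc ∫⁻ u in Set.Ioo (0:ℝ) T, (if x + B u ω ≤ (1/2:ℝ)^n then (1:ℝ≥0∞) else 0)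
          ≤ ∫⁻ u in Set.Ioo (0:ℝ) T,
              Set.indicator (AuxBM.JF2 B x ((1/2:ℝ)^n)) (fun _ => (1:ℝ≥0∞)) (u, ω) :=
            lintegral_mono_ae ((ae_restrict_iff' measurableSet_Ioo).mpr (ae_of_all _ hptwise))
        _ ≤ AuxBM.Kfun B x n ω := by
            refine lintegral_mono' (Measure.restrict_mono ?_ le_rfl) le_rfl
            intro u hu
            exact hu.1
  have hfin : volume (Set.Ioo (0:ℝ) T) + ∑' n : ℕ, (2:ℝ≥0∞)^(n+1) * AuxBM.Kfun B x n ω < ⊤ := by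
    refine ENNReal.add_lt_top.mpr ⟨?_, hW⟩
    rw [Real.volume_Ioo]
    exact ENNReal.ofReal_lt_top
  exact lt_of_le_of_lt key hfin
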